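/- The averaged translated indicators are identically 1 on the corresponding intervals: let ω_1 := ∫_0^1 z^{2α+1} dz. For every x ∈ [0,1), (1/ω_1)·∫_0^1 τ_x 1_{[0,2]}(y)·y^{2α+1} dy = 1, and for every integer n ≥ 2 and every x ∈ [n−1, n), (1/ω_1)·∫_0^1 τ_x 1_{[n−2,n+1]}(y)·y^{2α+1} dy = 1. -/

import Mathlib

open MeasureTheory Real Set ENNReal ComplexOrder

noncomputable section

/-- The Haar measure `ω_α(dz) = z^(2α+1) dz` of the Bessel–Kingman hypergroup,
supported on `(0, ∞)`. -/
def omegaM (α : ℝ) : Measure ℝ :=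
  (volume.restrict (Set.Ioi (0:ℝ))).withDensity fun z => ENNReal.ofReal (z ^ (2*α+1))

/-- The interval `I_{n+1} = [n, n+1)` (0-based reindexing of the paper's `I_n = [n-1, n)`). -/
def In (n : ℕ) : Set ℝ := Set.Ico (n : ℝ) ((n : ℝ) + 1)

/-- `ω_α`-measure of the `n`-th interval. -/
def wn (α : ℝ) (n : ℕ) : ℝ≥0∞ := omegaM α (In n)

/-- The discrete amalgam norm `‖f‖_{p,q}` (with the conventions of the paper for
`p = ∞` or `q = ∞`, where the corresponding integral/sum becomes a supremum). -/
def amalgamNorm (α : ℝ) (p q : ℝ≥0∞) {E : Type*} [NormedAddCommGroup E] (f : ℝ → E) : ℝ≥0∞ :=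
  let A : ℕ → ℝ≥0∞ := fun n =>
    if p = ∞ then ⨆ x ∈ In n, (‖f x‖₊ : ℝ≥0∞)
    else ((wn α n)⁻¹ * ∫⁻ x in In n, (‖f x‖₊ : ℝ≥0∞) ^ p.toReal ∂(omegaM α)) ^ (1/p.toReal)
  if q = ∞ then ⨆ n, A n
  else (∑' n, wn α n * (A n) ^ q.toReal) ^ (1/q.toReal)

/-- The constant `C_Γ = Γ(α+1)/(Γ(1/2)·Γ(α+1/2)·2^(2α-1))`. -/
def CGamma (α : ℝ) : ℝ :=
  Real.Gamma (α+1) / (Real.Gamma (1/2) * Real.Gamma (α+1/2) * (2:ℝ) ^ (2*α-1))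

/-- The Bessel–Kingman kernel `K_α(x,y,z)`. -/
def Kker (α x y z : ℝ) : ℝ :=
  CGamma α * ((z^2 - (x-y)^2) * ((x+y)^2 - z^2)) ^ (α - 1/2) / (x*y*z) ^ (2*α)

/-- The hypergroup translation `τ_y f(x)`, with the conventions `τ_0 f = f` and
`τ_y f(0) = f(y)`. -/
def tau {E : Type*} [NormedAddCommGroup E] [NormedSpace ℝ E]
    (α y : ℝ) (f : ℝ → E) (x : ℝ) : E :=
  if y = 0 then f x
  else if x = 0 then f y
  else ∫ z in |x - y|..(x + y), (Kker α x y z * z ^ (2*α+1)) • f z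

/-- The hypergroup convolution `(f ⊛ g)(x) = ∫_0^∞ f(y)·τ_y g(x)·y^(2α+1) dy`. -/
def convBK (α : ℝ) (f g : ℝ → ℂ) (x : ℝ) : ℂ :=
  ∫ y in Set.Ioi (0:ℝ), (y ^ (2*α+1)) • (f y * tau α y g x)

/-- The modified Bessel function `j_α`. -/
def jBessel (α x : ℝ) : ℝ :=
  ∑' k : ℕ, (-1)^k * Real.Gamma (α+1) / (2^(2*k) * (k.factorial : ℝ) * Real.Gamma (α + k + 1))
    * x^(2*k)

/-- The hypergroup Fourier transform `f̂(λ) = ∫_0^∞ f(x)·j_α(λx)·x^(2α+1) dx`. -/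
def fourierBK (α : ℝ) (f : ℝ → ℂ) (lam : ℝ) : ℂ :=
  ∫ x in Set.Ioi (0:ℝ), (jBessel α (lam * x) * x ^ (2*α+1)) • f x

/-- The continuous `(p,∞)`-amalgam norm
`sup_{y ≥ 0} (∫_0^∞ |f(x)|^p · τ_y 1_{[0,1]}(x) · x^(2α+1) dx)^(1/p)`. -/
def contNorm (α p : ℝ) {E : Type*} [NormedAddCommGroup E] (f : ℝ → E) : ℝ≥0∞ :=
  ⨆ y ∈ Set.Ici (0:ℝ),
    (∫⁻ x, (‖f x‖₊ : ℝ≥0∞) ^ p *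
        ENNReal.ofReal (tau α y ((Set.Icc (0:ℝ) 1).indicator 1) x) ∂(omegaM α)) ^ (1/p)

/-- The weight `ω_n = ∫_{n-1}^{n} z^(2α+1) dz`, as a real number. -/
def wIn (α : ℝ) (n : ℕ) : ℝ := ∫ z in ((n:ℝ)-1)..(n:ℝ), z ^ (2*α+1)

/-- The averaged translated indicators `g_n = (1/ω₁)·1_{I₁} ⊛ 1_{[n-2,n+1]}` are
identically `1` on `I_n`. -/
lemma realBeta (p : ℝ) (hp : 0 < p) :
    ∫ t in (0:ℝ)..1, t ^ (p-1) * (1-t) ^ (p-1) = Real.Gamma p ^ 2 / Real.Gamma (2*p) := by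
  have h := Complex.Gamma_mul_Gamma_eq_betaIntegral (s := (p:ℂ)) (t := (p:ℂ)) (by simpa) (by simpa)
  have hbeta : Complex.betaIntegral p p
      = ((∫ t in (0:ℝ)..1, t ^ (p-1) * (1-t) ^ (p-1) : ℝ) : ℂ) := by
    rw [Complex.betaIntegral, ← intervalIntegral.integral_ofReal]
    refine intervalIntegral.integral_congr fun t ht => ?_
    rw [Set.uIcc_of_le (by norm_num)] at ht
    have e : ((p:ℂ) - 1) = ((p-1:ℝ):ℂ) := by push_cast; ring
    have e1 : (1 - (t:ℂ)) = ((1 - t:ℝ):ℂ) := by push_cast; ring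
    rw [e, e1, ← Complex.ofReal_cpow ht.1, ← Complex.ofReal_cpow (by linarith [ht.2]),
      ← Complex.ofReal_mul]
  have e2 : ((p:ℂ) + (p:ℂ)) = ((2*p:ℝ):ℂ) := by push_cast; ring
  rw [hbeta, e2, Complex.Gamma_ofReal, Complex.Gamma_ofReal, ← Complex.ofReal_mul,
    ← Complex.ofReal_mul] at h
  have h2p : Real.Gamma (2*p) ≠ 0 :=
    Real.Gamma_ne_zero (by intro m; nlinarith [Nat.cast_nonneg (α := ℝ) m])
  have := Complex.ofReal_injective h
  field_simp [h2p]
  rw [mul_comm p 2]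
  nlinarith [this]

lemma betaAB {A B : ℝ} (q : ℝ) (hAB : A < B) (hq : 0 ≤ q) :
    ∫ u in A..B, ((u - A) * (B - u)) ^ q
      = (B - A) ^ (2*q+1) * (Real.Gamma (q+1) ^ 2 / Real.Gamma (2*q+2)) := by
  have hs : 0 < B - A := by linarith
  have h1 := intervalIntegral.integral_comp_mul_add
    (f := fun u => ((u - A) * (B - u)) ^ q) (a := 0) (b := 1) (ne_of_gt hs) A
  simp only [mul_zero, zero_add, mul_one] at h1
  have hBA : B - A + A = B := by ring
  rw [hBA] at h1
  have h2 : (∫ t in (0:ℝ)..1, (((B-A)*t + A - A) * (B - ((B-A)*t + A))) ^ q)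
      = (B-A)^q * (B-A)^q * ∫ t in (0:ℝ)..1, t ^ (q+1-1) * (1-t) ^ (q+1-1) := by
    rw [← intervalIntegral.integral_const_mul]
    refine intervalIntegral.integral_congr fun t ht => ?_
    rw [Set.uIcc_of_le (by norm_num)] at ht
    have e : ((B-A)*t + A - A) * (B - ((B-A)*t + A)) = ((B-A)*t) * ((B-A)*(1-t)) := by ring
    rw [e, Real.mul_rpow (mul_nonneg hs.le ht.1) (mul_nonneg hs.le (by linarith [ht.2])),
      Real.mul_rpow hs.le ht.1, Real.mul_rpow hs.le (by linarith [ht.2])]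
    simp only [add_sub_cancel_right]
    ring
  rw [h2, realBeta (q+1) (by linarith)] at h1
  have e3 : 2*(q+1) = 2*q+2 := by ring
  rw [e3] at h1
  rw [smul_eq_mul] at h1
  have : (∫ u in A..B, ((u - A) * (B - u)) ^ q)
      = (B-A) * ((B-A)^q * (B-A)^q * (Real.Gamma (q+1) ^ 2 / Real.Gamma (2*q+2))) := by
    rw [h1]; field_simp
  rw [this, show (2*q+1) = q + q + 1 by ring, Real.rpow_add hs, Real.rpow_add hs, Real.rpow_one]
  ring

lemma sqSubst {a b : ℝ} (q : ℝ) (hq : 0 ≤ q) :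
    ∫ z in a..b, ((z^2 - a^2) * (b^2 - z^2)) ^ q * z
      = (1/2) * ∫ u in (a^2)..(b^2), ((u - a^2) * (b^2 - u)) ^ q := by
  have hg : Continuous fun u : ℝ => (1/2) * ((u - a^2) * (b^2 - u)) ^ q :=
    continuous_const.mul ((Real.continuous_rpow_const hq).comp
      (((continuous_id.sub continuous_const).mul (continuous_const.sub continuous_id))))
  have h := intervalIntegral.integral_comp_smul_deriv (a := a) (b := b)
    (f := fun z : ℝ => z^2) (f' := fun z : ℝ => 2*z)
    (g := fun u => (1/2) * ((u - a^2) * (b^2 - u)) ^ q)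
    (fun x _ => by simpa [mul_comm] using (hasDerivAt_pow 2 x))
    ((continuous_const.mul continuous_id).continuousOn) hg
  rw [← intervalIntegral.integral_const_mul]
  rw [show (∫ z in a..b, ((z^2 - a^2) * (b^2 - z^2)) ^ q * z)
      = ∫ z in a..b, (2*z) • (fun u => (1/2) * ((u - a^2) * (b^2 - u)) ^ q) (z^2) from
    intervalIntegral.integral_congr fun z _ => by simp [smul_eq_mul]; ring]
  simp only [Function.comp] at h
  rw [h]

lemma gamma_const (α : ℝ) (hα : 1/2 ≤ α) :
    CGamma α * ((4:ℝ)^(2*α) * (Real.Gamma (α+1/2)^2 / Real.Gamma (2*α+1))) / 2 = 1 := by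
  have hdup := Real.Gamma_mul_Gamma_add_half (α+1/2)
  rw [show 2*(α+1/2) = 2*α+1 by ring, show α+1/2+1/2 = α+1 by ring,
    show 1-(2*α+1) = -(2*α) by ring] at hdup
  have hG1 : 0 < Real.Gamma (α+1/2) := Real.Gamma_pos_of_pos (by linarith)
  have hG2 : 0 < Real.Gamma (α+1) := Real.Gamma_pos_of_pos (by linarith)
  have hG3 : 0 < Real.Gamma (2*α+1) := Real.Gamma_pos_of_pos (by linarith)
  have hpi : 0 < Real.sqrt π := Real.sqrt_pos.mpr Real.pi_pos
  have h4 : (4:ℝ)^(2*α) = 2^(4*α) := by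
    rw [show (4:ℝ) = (2:ℝ)^(2:ℝ) from by
      rw [show (2:ℝ) = ((2:ℕ):ℝ) from by norm_num, Real.rpow_natCast]; norm_num,
      ← Real.rpow_mul (by norm_num)]
    ring_nf
  have hkey : (2:ℝ)^(-(2*α)) * 2^(4*α) = 2^(2*α-1) * 2 := by
    rw [← Real.rpow_add (by norm_num), show -(2*α)+4*α = (2*α-1)+1 by ring,
      Real.rpow_add_one (by norm_num)]
  set G1 := Real.Gamma (α+1/2) with hG1d
  set G2 := Real.Gamma (α+1) with hG2d
  set G3 := Real.Gamma (2*α+1) with hG3d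
  rw [CGamma, Real.Gamma_one_half_eq, h4]
  have h2p : (0:ℝ) < 2^(2*α-1) := Real.rpow_pos_of_pos (by norm_num) _
  field_simp
  rw [show (α*2+1)/2 = α+1/2 by ring, ← hG1d]
  rw [show α*4 = 4*α by ring, show α*2-1 = 2*α-1 by ring]
  linear_combination (G1*(2:ℝ)^(4*α)) * hdup + (G3*Real.sqrt π*G1) * hkey

lemma kernel_norm {α x y : ℝ} (hα : 1/2 ≤ α) (hx : 0 < x) (hy : 0 < y) :
    ∫ z in |y - x|..(y + x), Kker α y x z * z ^ (2*α+1) = 1 := by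
  set a := |y - x| with ha_def
  set b := y + x with hb_def
  have ha : 0 ≤ a := abs_nonneg _
  have hab : a < b := by
    rw [ha_def, hb_def, abs_lt]; constructor <;> [linarith; linarith]
  have hq : (0:ℝ) ≤ α - 1/2 := by linarith
  have hxy : (0:ℝ) < x * y := mul_pos hx hy
  have hsq : (y - x)^2 = a^2 := (sq_abs _).symm
  have step1 : ∫ z in a..b, Kker α y x z * z ^ (2*α+1)
      = (CGamma α / (x*y)^(2*α)) * ∫ z in a..b, ((z^2 - a^2) * (b^2 - z^2)) ^ (α - 1/2) * z := by
    rw [← intervalIntegral.integral_const_mul]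
    refine intervalIntegral.integral_congr_ae (MeasureTheory.ae_of_all _ fun z hz => ?_)
    rw [Set.uIoc_of_le hab.le] at hz
    have hz0 : 0 < z := lt_of_le_of_lt ha hz.1
    have e2 : (y*x*z)^(2*α) = (x*y)^(2*α) * z^(2*α) := by
      rw [show y*x*z = (x*y)*z by ring, Real.mul_rpow hxy.le hz0.le]
    have e3 : z^(2*α+1) = z^(2*α) * z := by rw [Real.rpow_add hz0, Real.rpow_one]
    have hz2α : z^(2*α) ≠ 0 := (Real.rpow_pos_of_pos hz0 _).ne'
    have hxy2α : (x*y)^(2*α) ≠ 0 := (Real.rpow_pos_of_pos hxy _).ne'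
    rw [Kker, e2, e3, show z^2 - (y-x)^2 = z^2 - a^2 from by rw [hsq], ← hb_def]
    field_simp
  rw [step1, sqSubst (α - 1/2) hq, betaAB (α - 1/2) (by nlinarith) hq]
  have e4 : b^2 - a^2 = 4*(x*y) := by rw [← hsq, hb_def]; ring
  rw [e4, show 2*(α-1/2)+1 = 2*α by ring, show α-1/2+1 = α+1/2 by ring,
    show 2*(α-1/2)+2 = 2*α+1 by ring,
    Real.mul_rpow (by norm_num) hxy.le]
  have hxy2α : (x*y)^(2*α) ≠ 0 := (Real.rpow_pos_of_pos hxy _).ne'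
  have := gamma_const α hα
  field_simp at this ⊢
  linear_combination this

lemma tau_ind_one {α x y A B : ℝ} (hα : 1/2 ≤ α) (hx : 0 < x) (hy : 0 ≤ y)
    (h1 : A ≤ |y - x|) (h2 : y + x ≤ B) :
    tau α x ((Set.Icc A B).indicator (1 : ℝ → ℝ)) y = 1 := by
  rw [tau, if_neg hx.ne']
  rcases eq_or_lt_of_le hy with rfl | hy0
  · rw [if_pos rfl]
    have hxm : x ∈ Set.Icc A B := by
      constructor
      · calc A ≤ |0 - x| := h1
          _ = x := by rw [zero_sub, abs_neg, abs_of_pos hx]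
      · linarith
    simp [Set.indicator_of_mem hxm]
  · rw [if_neg hy0.ne']
    have hab : |y - x| ≤ y + x := by
      rw [abs_le]; constructor <;> [linarith; linarith]
    have hcongr : (∫ z in |y - x|..(y + x),
          (Kker α y x z * z ^ (2*α+1)) • (Set.Icc A B).indicator (1 : ℝ → ℝ) z)
        = ∫ z in |y - x|..(y + x), Kker α y x z * z ^ (2*α+1) := by
      refine intervalIntegral.integral_congr fun z hz => ?_
      rw [Set.uIcc_of_le hab] at hz
      have hzm : z ∈ Set.Icc A B := ⟨le_trans h1 hz.1, le_trans hz.2 h2⟩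
      simp [Set.indicator_of_mem hzm]
    rw [hcongr, kernel_norm hα hx hy0]

lemma wIn_one {α : ℝ} (hα : 1/2 ≤ α) : wIn α 1 = 1/(2*α+2) := by
  rw [wIn]
  norm_num
  rw [integral_rpow (Or.inl (by linarith))]
  rw [Real.one_rpow, Real.zero_rpow (by linarith)]
  ring

theorem averaged_translates_eq_one (α : ℝ) (hα : 1/2 ≤ α) :
    (∀ x ∈ Set.Ico (0:ℝ) 1,
      (1 / wIn α 1) *
        ∫ y in (0:ℝ)..1, tau α x ((Set.Icc (0:ℝ) 2).indicator (1 : ℝ → ℝ)) y * y ^ (2*α+1)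
        = 1) ∧
    ∀ n : ℕ, 2 ≤ n → ∀ x ∈ Set.Ico ((n:ℝ) - 1) (n:ℝ),
      (1 / wIn α 1) *
        ∫ y in (0:ℝ)..1,
          tau α x ((Set.Icc ((n:ℝ) - 2) ((n:ℝ) + 1)).indicator (1 : ℝ → ℝ)) y * y ^ (2*α+1)
        = 1 := by
  have hw : wIn α 1 = 1/(2*α+2) := wIn_one hα
  have hwne : wIn α 1 ≠ 0 := by rw [hw]; positivity
  have hbase : ∫ y in (0:ℝ)..1, y ^ (2*α+1) = wIn α 1 := by
    rw [wIn]; norm_num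
  constructor
  · intro x hx
    have hcongr : (∫ y in (0:ℝ)..1,
          tau α x ((Set.Icc (0:ℝ) 2).indicator (1 : ℝ → ℝ)) y * y ^ (2*α+1))
        = ∫ y in (0:ℝ)..1, y ^ (2*α+1) := by
      refine intervalIntegral.integral_congr fun y hy => ?_
      rw [Set.uIcc_of_le (by norm_num)] at hy
      rcases eq_or_lt_of_le hx.1 with rfl | hx0
      · rw [tau, if_pos rfl, Set.indicator_of_mem (Set.mem_Icc.mpr ⟨hy.1, by linarith [hy.2]⟩)]
        simp
      · rw [tau_ind_one hα hx0 hy.1 (abs_nonneg _) (by linarith [hy.2, hx.2]), one_mul]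
    rw [hcongr, hbase, one_div, inv_mul_cancel₀ hwne]
  · intro n hn x hx
    have hn2 : (2:ℝ) ≤ (n:ℝ) := by exact_mod_cast hn
    have hx1 : (1:ℝ) ≤ x := by linarith [hx.1]
    have hx0 : (0:ℝ) < x := by linarith
    have hcongr : (∫ y in (0:ℝ)..1,
          tau α x ((Set.Icc ((n:ℝ)-2) ((n:ℝ)+1)).indicator (1 : ℝ → ℝ)) y * y ^ (2*α+1))
        = ∫ y in (0:ℝ)..1, y ^ (2*α+1) := by
      refine intervalIntegral.integral_congr fun y hy => ?_
      rw [Set.uIcc_of_le (by norm_num)] at hy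
      have habs : |y - x| = x - y := by
        rw [abs_of_nonpos (by linarith [hy.2])]; ring
      rw [tau_ind_one hα hx0 hy.1 (by rw [habs]; linarith [hy.2, hx.1])
        (by linarith [hy.2, hx.2]), one_mul]
    rw [hcongr, hbase, one_div, inv_mul_cancel₀ hwne]
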